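/- Let n, t be positive natural numbers, ε > 0 and δ ∈ (0, 1), and set ρ = (√(log(1/δ) + ε) − √(log(1/δ)))². For each j : Fin t let V j and V' j be finite subsets of (Fin n) × (Fin n) (the directed ARP-request graphs of week j), and suppose there exists a single ordered pair e : (Fin n) × (Fin n) such that for every j, V j and V' j agree on every pair other than e (edge-neighboring). Define D(V) : Fin t → ℝ by D(V) j = card(V j), and similarly D(V'). Let G be the product measure on Fin t → ℝ whose coordinates are i.i.d. Gaussian with mean 0 and variance t/(2ρ), and let P : (Fin t → ℝ) → (Fin t → ℝ) be any measurable function (the threshold-at-zero-then-round post-processing). Then the pushforward of G under y ↦ P(D(V) + y) and the pushforward of G under y ↦ P(D(V') + y) are (ε, δ)-indistinguishable. (The naïve-δ approach satisfies (ε, δ)-edge-differential privacy.) -/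

import Mathlib

open MeasureTheory ProbabilityTheory Real
open scoped ENNReal NNReal

/-- Measures `μ` and `ν` are `(ε, δ)`-indistinguishable if for every measurable set `S`,
`μ S ≤ exp ε * ν S + δ`. -/
def Indist {X : Type*} [MeasurableSpace X] (μ ν : Measure X) (ε δ : ℝ) : Prop :=
  ∀ S : Set X, MeasurableSet S →
    μ S ≤ ENNReal.ofReal (Real.exp ε) * ν S + ENNReal.ofReal δ

/-- The weekly total ARP degree: week `j`'s degree sum is the number of directed edges
(ordered pairs of users) in the ARP-request graph of week `j`. -/
def weeklyDegrees {n t : ℕ} (V : Fin t → Finset (Fin n × Fin n)) : Fin t → ℝ :=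
  fun j => ((V j).card : ℝ)

lemma lintegral_pi_fin_prod : ∀ {n : ℕ} (μ : Fin n → Measure ℝ), (∀ i, SigmaFinite (μ i)) →
    ∀ (f : Fin n → ℝ → ℝ≥0∞), (∀ i, Measurable (f i)) →
    ∫⁻ x, ∏ i, f i (x i) ∂Measure.pi μ = ∏ i, ∫⁻ z, f i z ∂(μ i) := by
  intro n
  induction n with
  | zero => intro μ _ f _; simp [Measure.pi_of_empty]
  | succ n ih =>
    intro μ hσ f hf
    have := hσ
    have h := (measurePreserving_piFinSuccAbove μ 0).symm
    have hF : Measurable fun x : Fin (n+1) → ℝ => ∏ i, f i (x i) :=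
      Finset.measurable_prod _ fun i _ => (hf i).comp (measurable_pi_apply i)
    rw [← h.lintegral_comp hF]
    have : ∀ p : ℝ × (Fin n → ℝ),
        (∏ i, f i (((MeasurableEquiv.piFinSuccAbove (fun _ => ℝ) 0).symm p) i))
        = f 0 p.1 * ∏ j, f j.succ (p.2 j) := by
      intro p
      rw [Fin.prod_univ_succ]
      simp [MeasurableEquiv.piFinSuccAbove_symm_apply, Fin.insertNth_zero]
    simp_rw [this]
    have key : ∫⁻ p : ℝ × (Fin n → ℝ), (f 0 p.1) * ((fun w : Fin n → ℝ => ∏ j, f j.succ (w j)) p.2)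
        ∂((μ 0).prod (Measure.pi fun j => μ (Fin.succAbove 0 j)))
        = (∫⁻ z, f 0 z ∂μ 0) * ∫⁻ w, ∏ j, f j.succ (w j) ∂(Measure.pi fun j => μ (Fin.succAbove 0 j)) :=
      lintegral_prod_mul (hf 0).aemeasurable
        (Finset.measurable_prod _ fun (i : Fin n) _ => ((hf i.succ).comp (measurable_pi_apply i))).aemeasurable
    rw [key]
    simp only [Fin.succAbove_zero]
    rw [ih _ (fun i => hσ i.succ) _ (fun i => hf i.succ), Fin.prod_univ_succ]

noncomputable def shiftDens (a : ℝ) (v : ℝ≥0) (z : ℝ) : ℝ≥0∞ :=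
  ENNReal.ofReal (Real.exp ((2 * a * z - a ^ 2) / (2 * v)))

lemma measurable_shiftDens (a : ℝ) (v : ℝ≥0) : Measurable (shiftDens a v) := by
  unfold shiftDens
  fun_prop

lemma gaussianPDF_shift (a : ℝ) (v : ℝ≥0) (hv : v ≠ 0) (z : ℝ) :
    gaussianPDF a v z = gaussianPDF 0 v z * shiftDens a v z := by
  rw [gaussianPDF, gaussianPDF, shiftDens, ← ENNReal.ofReal_mul (gaussianPDFReal_nonneg _ _ _)]
  congr 1
  have hv' : (v : ℝ) ≠ 0 := by exact_mod_cast hv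
  rw [gaussianPDFReal, gaussianPDFReal, mul_assoc, mul_assoc, ← Real.exp_add]
  congr 2
  field_simp
  ring

lemma gaussianReal_eq_withDensity (a : ℝ) (v : ℝ≥0) (hv : v ≠ 0) :
    gaussianReal a v = (gaussianReal 0 v).withDensity (shiftDens a v) := by
  rw [gaussianReal_of_var_ne_zero _ hv, gaussianReal_of_var_ne_zero _ hv,
    ← withDensity_mul _ (measurable_gaussianPDF 0 v) (measurable_shiftDens a v)]
  congr 1
  ext z
  exact gaussianPDF_shift a v hv z

lemma map_add_pi_gauss {t : ℕ} (a : Fin t → ℝ) (v : ℝ≥0) :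
    Measure.map (fun y => a + y) (Measure.pi fun _ : Fin t => gaussianReal 0 v)
      = Measure.pi (fun j => gaussianReal (a j) v) := by
  refine (Measure.pi_eq (μ := fun j => gaussianReal (a j) v)
    (μ' := Measure.map (fun y => a + y) (Measure.pi fun _ : Fin t => gaussianReal 0 v)) fun s hs => ?_).symm
  rw [Measure.map_apply (f := fun y : Fin t → ℝ => a + y) (by fun_prop) (MeasurableSet.univ_pi hs)]
  have : (fun y : Fin t → ℝ => a + y) ⁻¹' Set.univ.pi s
      = Set.univ.pi (fun j => (fun z => a j + z) ⁻¹' s j) := by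
    ext y
    simp [Set.mem_univ_pi]
  rw [this, Measure.pi_pi]
  refine Finset.prod_congr rfl fun j _ => ?_
  rw [← Measure.map_apply (f := fun z => a j + z) (by fun_prop) (hs j),
    gaussianReal_map_const_add, zero_add]

lemma pi_gauss_withDensity {t : ℕ} (a : Fin t → ℝ) (v : ℝ≥0) (hv : v ≠ 0) :
    Measure.pi (fun j : Fin t => gaussianReal (a j) v)
      = (Measure.pi fun _ : Fin t => gaussianReal 0 v).withDensity
          (fun x => ∏ j, shiftDens (a j) v (x j)) := by
  refine (Measure.pi_eq (μ := fun j : Fin t => gaussianReal (a j) v)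
    (μ' := (Measure.pi fun _ : Fin t => gaussianReal 0 v).withDensity
      (fun x => ∏ j, shiftDens (a j) v (x j))) fun s hs => ?_)
  rw [withDensity_apply _ (MeasurableSet.univ_pi hs), ← lintegral_indicator (MeasurableSet.univ_pi hs)]
  have hind : ∀ x : Fin t → ℝ, (Set.univ.pi s).indicator (fun x => ∏ j, shiftDens (a j) v (x j)) x
      = ∏ j, (s j).indicator (shiftDens (a j) v) (x j) := by
    intro x
    by_cases hx : x ∈ Set.univ.pi s
    · rw [Set.indicator_of_mem hx]
      refine Finset.prod_congr rfl fun j _ => ?_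
      rw [Set.indicator_of_mem (hx j (Set.mem_univ j))]
    · rw [Set.indicator_of_notMem hx]
      rw [Set.mem_univ_pi] at hx
      push_neg at hx
      obtain ⟨j, hj⟩ := hx
      exact (Finset.prod_eq_zero (Finset.mem_univ j)
        (by rw [Set.indicator_of_notMem hj])).symm
  simp_rw [hind]
  rw [lintegral_pi_fin_prod _ (fun _ => inferInstance) _
    (fun j => (measurable_shiftDens (a j) v).indicator (hs j))]
  refine Finset.prod_congr rfl fun j _ => ?_
  rw [lintegral_indicator (hs j), ← withDensity_apply _ (hs j),
    ← gaussianReal_eq_withDensity _ _ hv]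

lemma lintegral_exp_gauss (c : ℝ) (v : ℝ≥0) (hv : v ≠ 0) :
    ∫⁻ z, ENNReal.ofReal (Real.exp (c * z)) ∂gaussianReal 0 v
      = ENNReal.ofReal (Real.exp (c ^ 2 * v / 2)) := by
  have hv' : (v : ℝ) ≠ 0 := by exact_mod_cast hv
  have key : ∀ z, gaussianPDF 0 v z * ENNReal.ofReal (Real.exp (c * z))
      = ENNReal.ofReal (Real.exp (c ^ 2 * v / 2)) * gaussianPDF (c * v) v z := by
    intro z
    rw [gaussianPDF_shift (c * v) v hv z, shiftDens]
    rw [mul_comm (ENNReal.ofReal (Real.exp (c ^ 2 * v / 2))), mul_assoc,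
      ← ENNReal.ofReal_mul (Real.exp_nonneg _), ← Real.exp_add]
    congr 3
    field_simp
    ring
  rw [gaussianReal_of_var_ne_zero _ hv,
    lintegral_withDensity_eq_lintegral_mul _ (measurable_gaussianPDF 0 v)
      (by fun_prop)]
  simp_rw [Pi.mul_apply, key]
  rw [lintegral_const_mul _ (measurable_gaussianPDF _ v), lintegral_gaussianPDF_eq_one _ hv,
    mul_one]

lemma chernoff_gauss {t : ℕ} (v : ℝ≥0) (hv : v ≠ 0) (Δ : Fin t → ℝ) (s x₀ : ℝ) (hs : 0 ≤ s) :
    (Measure.pi fun _ : Fin t => gaussianReal 0 v) {y | x₀ < ∑ j, Δ j * y j}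
      ≤ ENNReal.ofReal (Real.exp (-(s * x₀) + s ^ 2 * (∑ j, (Δ j) ^ 2) * v / 2)) := by
  set G := Measure.pi fun _ : Fin t => gaussianReal 0 v
  have hWm : Measurable fun y : Fin t → ℝ => ∑ j, Δ j * y j := by fun_prop
  have hset : MeasurableSet {y : Fin t → ℝ | x₀ < ∑ j, Δ j * y j} :=
    measurableSet_lt measurable_const hWm
  have step1 : G {y | x₀ < ∑ j, Δ j * y j}
      ≤ ∫⁻ y, ENNReal.ofReal (Real.exp (s * ((∑ j, Δ j * y j) - x₀))) ∂G := by
    rw [← lintegral_indicator_one hset]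
    refine lintegral_mono fun y => ?_
    by_cases hy : y ∈ {y : Fin t → ℝ | x₀ < ∑ j, Δ j * y j}
    · rw [Set.indicator_of_mem hy]
      simp only [Pi.one_apply]
      rw [show (1 : ℝ≥0∞) = ENNReal.ofReal (Real.exp 0) by simp]
      exact ENNReal.ofReal_le_ofReal (Real.exp_le_exp.mpr
        (mul_nonneg hs (by linarith [Set.mem_setOf_eq ▸ hy])))
    · rw [Set.indicator_of_notMem hy]
      exact zero_le
  have step2 : ∫⁻ y, ENNReal.ofReal (Real.exp (s * ((∑ j, Δ j * y j) - x₀))) ∂G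
      = ENNReal.ofReal (Real.exp (-(s * x₀))) * ∏ j, ∫⁻ z, ENNReal.ofReal (Real.exp (s * Δ j * z))
          ∂gaussianReal 0 v := by
    have : ∀ y : Fin t → ℝ, ENNReal.ofReal (Real.exp (s * ((∑ j, Δ j * y j) - x₀)))
        = ENNReal.ofReal (Real.exp (-(s * x₀))) * ∏ j, ENNReal.ofReal (Real.exp (s * Δ j * y j)) := by
      intro y
      rw [← ENNReal.ofReal_prod_of_nonneg (fun j _ => Real.exp_nonneg _),
        ← ENNReal.ofReal_mul (Real.exp_nonneg _), ← Real.exp_sum, ← Real.exp_add]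
      congr 1
      rw [mul_sub, Finset.mul_sum]
      simp_rw [mul_assoc]
      ring
    simp_rw [this]
    rw [lintegral_const_mul _ (by fun_prop)]
    congr 1
    exact lintegral_pi_fin_prod (fun _ => gaussianReal 0 v) (fun _ => inferInstance)
      (fun j z => ENNReal.ofReal (Real.exp (s * Δ j * z))) (fun j => by fun_prop)
  calc G {y | x₀ < ∑ j, Δ j * y j}
      ≤ ENNReal.ofReal (Real.exp (-(s * x₀))) * ∏ j, ∫⁻ z,
          ENNReal.ofReal (Real.exp (s * Δ j * z)) ∂gaussianReal 0 v := step1.trans step2.le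
    _ = ENNReal.ofReal (Real.exp (-(s * x₀) + s ^ 2 * (∑ j, (Δ j) ^ 2) * v / 2)) := by
        simp_rw [lintegral_exp_gauss _ v hv]
        rw [← ENNReal.ofReal_prod_of_nonneg (fun j _ => Real.exp_nonneg _),
          ← ENNReal.ofReal_mul (Real.exp_nonneg _), ← Real.exp_sum, ← Real.exp_add]
        have : (s ^ 2 * ∑ j, (Δ j) ^ 2) * v / 2 = ∑ j, (s * Δ j) ^ 2 * v / 2 := by
          rw [Finset.mul_sum, Finset.sum_mul, Finset.sum_div]
          exact Finset.sum_congr rfl fun j _ => by ring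
        rw [this]

lemma rho_key (ε δ ρ m : ℝ) (hε : 0 < ε) (hδ₀ : 0 < δ) (hδ₁ : δ < 1)
    (hρ : ρ = (Real.sqrt (Real.log (1 / δ) + ε) - Real.sqrt (Real.log (1 / δ))) ^ 2)
    (hm : 0 < m) (hmρ : m ≤ ρ) :
    m ≤ ε ∧ Real.exp (-((ε - m) ^ 2 / (4 * m))) ≤ δ := by
  set L := Real.log (1 / δ) with hL
  have hL0 : 0 < L := by
    rw [hL, one_div, Real.log_inv]
    linarith [Real.log_neg hδ₀ hδ₁]
  have h1 : Real.sqrt L ≤ Real.sqrt (L + ε) := Real.sqrt_le_sqrt (by linarith)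
  have hsρ : Real.sqrt ρ = Real.sqrt (L + ε) - Real.sqrt L := by
    rw [hρ, Real.sqrt_sq (by linarith)]
  have h2 : Real.sqrt (L + ε) ^ 2 = L + ε := Real.sq_sqrt (by linarith)
  have h3 : Real.sqrt L ^ 2 = L := Real.sq_sqrt hL0.le
  have hεeq : ε = ρ + 2 * Real.sqrt ρ * Real.sqrt L := by
    rw [hsρ, hρ]
    linear_combination h3 - h2
  have hsm : Real.sqrt m ≤ Real.sqrt ρ := Real.sqrt_le_sqrt hmρ
  have hsm2 : Real.sqrt m ^ 2 = m := Real.sq_sqrt hm.le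
  have hsρ2 : Real.sqrt ρ ^ 2 = ρ := Real.sq_sqrt (hρ ▸ sq_nonneg _)
  have hkey : 2 * Real.sqrt m * Real.sqrt L ≤ ε - m := by
    nlinarith [mul_nonneg (sub_nonneg.2 hsm) (Real.sqrt_nonneg L),
      mul_nonneg (sub_nonneg.2 hsm) (by positivity : (0:ℝ) ≤ Real.sqrt ρ + Real.sqrt m)]
  have hmε : m ≤ ε := by nlinarith [Real.sqrt_nonneg L, Real.sqrt_nonneg m, Real.sqrt_nonneg ρ]
  refine ⟨hmε, ?_⟩
  have h4 : 4 * m * L ≤ (ε - m) ^ 2 := by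
    nlinarith [mul_nonneg (mul_nonneg (Real.sqrt_nonneg m) (Real.sqrt_nonneg L)) (by norm_num : (0:ℝ) ≤ 2)]
  have h5 : L ≤ (ε - m) ^ 2 / (4 * m) := by
    rw [le_div_iff₀ (by linarith)]
    linarith
  calc Real.exp (-((ε - m) ^ 2 / (4 * m))) ≤ Real.exp (-L) := Real.exp_le_exp.mpr (by linarith)
    _ = δ := by rw [hL, one_div, Real.log_inv, neg_neg, Real.exp_log hδ₀]

set_option maxHeartbeats 1000000 in
lemma shift_indist {t : ℕ} (ht : 0 < t) (ε δ ρ : ℝ) (hε : 0 < ε) (hδ₀ : 0 < δ) (hδ₁ : δ < 1)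
    (hρ : ρ = (Real.sqrt (Real.log (1 / δ) + ε) - Real.sqrt (Real.log (1 / δ))) ^ 2)
    (a b : Fin t → ℝ) (hab : ∑ j, (a j - b j) ^ 2 ≤ (t : ℝ)) :
    ∀ T : Set (Fin t → ℝ), MeasurableSet T →
      (Measure.map (fun y => a + y)
        (Measure.pi fun _ : Fin t => gaussianReal 0 (((t : ℝ) / (2 * ρ)).toNNReal))) T
      ≤ ENNReal.ofReal (Real.exp ε) * (Measure.map (fun y => b + y)
          (Measure.pi fun _ : Fin t => gaussianReal 0 (((t : ℝ) / (2 * ρ)).toNNReal))) T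
        + ENNReal.ofReal δ := by
  intro T hT
  -- basic facts about ρ and v
  have hL0 : 0 < Real.log (1 / δ) := by
    rw [one_div, Real.log_inv]
    linarith [Real.log_neg hδ₀ hδ₁]
  have hρ0 : 0 < ρ := by
    rw [hρ]
    have : Real.sqrt (Real.log (1 / δ)) < Real.sqrt (Real.log (1 / δ) + ε) :=
      Real.sqrt_lt_sqrt hL0.le (by linarith)
    have h' : 0 < Real.sqrt (Real.log (1 / δ) + ε) - Real.sqrt (Real.log (1 / δ)) := by linarith
    positivity
  set v : ℝ≥0 := ((t : ℝ) / (2 * ρ)).toNNReal with hvdef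
  have htpos : (0 : ℝ) < t := by exact_mod_cast ht
  have hvpos : 0 < (t : ℝ) / (2 * ρ) := div_pos htpos (by positivity)
  have hvco : (v : ℝ) = (t : ℝ) / (2 * ρ) := Real.coe_toNNReal _ hvpos.le
  have hv : v ≠ 0 := by
    intro h
    rw [h] at hvco
    simp at hvco
    linarith
  have hv0 : 0 < (v : ℝ) := by rw [hvco]; exact hvpos
  set G := Measure.pi fun _ : Fin t => gaussianReal 0 v with hG
  set Δ : Fin t → ℝ := fun j => a j - b j with hΔ
  set r : ℝ := ∑ j, (Δ j) ^ 2 with hr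
  have hr0 : 0 ≤ r := Finset.sum_nonneg fun j _ => sq_nonneg _
  by_cases hrz : r = 0
  · -- a = b, the two measures agree
    have habeq : a = b := by
      funext j
      have := (Finset.sum_eq_zero_iff_of_nonneg (fun j _ => sq_nonneg (Δ j))).mp hrz j
        (Finset.mem_univ j)
      have : Δ j = 0 := by nlinarith [sq_nonneg (Δ j)]
      simpa [hΔ, sub_eq_zero] using this
    rw [habeq]
    calc (Measure.map (fun y => b + y) G) T
        = 1 * (Measure.map (fun y => b + y) G) T := (one_mul _).symm
      _ ≤ ENNReal.ofReal (Real.exp ε) * (Measure.map (fun y => b + y) G) T := by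
          gcongr
          rw [ENNReal.one_le_ofReal]
          linarith [Real.add_one_le_exp ε]
      _ ≤ _ := le_self_add
  · have hrpos : 0 < r := lt_of_le_of_ne hr0 (Ne.symm hrz)
    set m : ℝ := r / (2 * (v : ℝ)) with hm
    have hm0 : 0 < m := div_pos hrpos (mul_pos two_pos hv0)
    have hmρ : m ≤ ρ := by
      rw [hm, hvco, div_le_iff₀ (by positivity)]
      have h2 : ρ * (2 * ((t : ℝ) / (2 * ρ))) = t := by
        field_simp
      rw [h2]
      exact hab
    obtain ⟨hmε, hexp⟩ := rho_key ε δ ρ m hε hδ₀ hδ₁ hρ hm0 hmρ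
    set x₀ : ℝ := (v : ℝ) * ε - r / 2 with hx₀
    have hx₀eq : x₀ = (v : ℝ) * (ε - m) := by
      rw [hx₀, hm]
      field_simp
    have hx₀0 : 0 ≤ x₀ := by
      rw [hx₀eq]
      exact mul_nonneg hv0.le (by linarith)
    set s : ℝ := x₀ / (r * (v : ℝ)) with hs
    have hs0 : 0 ≤ s := div_nonneg hx₀0 (mul_nonneg hrpos.le hv0.le)
    -- densities
    set Fa : (Fin t → ℝ) → ℝ≥0∞ := fun x => ∏ j, shiftDens (a j) v (x j) with hFa
    set Fb : (Fin t → ℝ) → ℝ≥0∞ := fun x => ∏ j, shiftDens (b j) v (x j) with hFb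
    have hFam : Measurable Fa :=
      Finset.measurable_prod _ fun j _ => (measurable_shiftDens (a j) v).comp (measurable_pi_apply j)
    have hFbm : Measurable Fb :=
      Finset.measurable_prod _ fun j _ => (measurable_shiftDens (b j) v).comp (measurable_pi_apply j)
    have hμ : Measure.map (fun y => a + y) G = G.withDensity Fa := by
      rw [hG, map_add_pi_gauss, pi_gauss_withDensity _ _ hv]
    have hν : Measure.map (fun y => b + y) G = G.withDensity Fb := by
      rw [hG, map_add_pi_gauss, pi_gauss_withDensity _ _ hv]
    -- log-likelihood ratio
    set La : (Fin t → ℝ) → ℝ := fun x => ∑ j, (2 * a j * x j - (a j) ^ 2) / (2 * (v : ℝ)) with hLa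
    set Lb : (Fin t → ℝ) → ℝ := fun x => ∑ j, (2 * b j * x j - (b j) ^ 2) / (2 * (v : ℝ)) with hLb
    have hFaeq : ∀ x, Fa x = ENNReal.ofReal (Real.exp (La x)) := by
      intro x
      rw [hFa, hLa]
      simp only [shiftDens]
      rw [← ENNReal.ofReal_prod_of_nonneg (fun j _ => Real.exp_nonneg _), ← Real.exp_sum]
    have hFbeq : ∀ x, Fb x = ENNReal.ofReal (Real.exp (Lb x)) := by
      intro x
      rw [hFb, hLb]
      simp only [shiftDens]
      rw [← ENNReal.ofReal_prod_of_nonneg (fun j _ => Real.exp_nonneg _), ← Real.exp_sum]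
    have hLam : Measurable La := by
      rw [hLa]; fun_prop
    have hLbm : Measurable Lb := by
      rw [hLb]; fun_prop
    set B : Set (Fin t → ℝ) := {x | ε < La x - Lb x} with hB
    have hBm : MeasurableSet B := measurableSet_lt measurable_const (hLam.sub hLbm)
    -- good part
    have good : (G.withDensity Fa) (T \ B) ≤ ENNReal.ofReal (Real.exp ε) * (G.withDensity Fb) T := by
      rw [withDensity_apply _ (hT.diff hBm)]
      have hmono : ∀ x ∈ T \ B, Fa x ≤ ENNReal.ofReal (Real.exp ε) * Fb x := by
        intro x hx
        have hxB : ¬ (ε < La x - Lb x) := hx.2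
        push_neg at hxB
        rw [hFaeq, hFbeq, ← ENNReal.ofReal_mul (Real.exp_nonneg _), ← Real.exp_add]
        exact ENNReal.ofReal_le_ofReal (Real.exp_le_exp.mpr (by linarith))
      calc ∫⁻ x in T \ B, Fa x ∂G ≤ ∫⁻ x in T \ B, ENNReal.ofReal (Real.exp ε) * Fb x ∂G :=
            setLIntegral_mono (by fun_prop) hmono
        _ = ENNReal.ofReal (Real.exp ε) * ∫⁻ x in T \ B, Fb x ∂G := lintegral_const_mul _ hFbm
        _ = ENNReal.ofReal (Real.exp ε) * (G.withDensity Fb) (T \ B) := by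
            rw [withDensity_apply _ (hT.diff hBm)]
        _ ≤ ENNReal.ofReal (Real.exp ε) * (G.withDensity Fb) T := by
            gcongr
            exact Set.diff_subset
    -- bad part
    have badpre : (fun y => a + y) ⁻¹' B = {y : Fin t → ℝ | x₀ < ∑ j, Δ j * y j} := by
      ext y
      simp only [Set.mem_preimage, hB, Set.mem_setOf_eq]
      have key : ∀ j, (2 * a j * (a j + y j) - a j ^ 2) / (2 * (v : ℝ))
          - (2 * b j * (a j + y j) - b j ^ 2) / (2 * (v : ℝ))
          = (Δ j * y j + (Δ j) ^ 2 / 2) / (v : ℝ) := by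
        intro j
        rw [hΔ]
        field_simp
        ring
      have hsum : La (a + y) - Lb (a + y) = ((∑ j, Δ j * y j) + r / 2) / (v : ℝ) := by
        rw [hLa, hLb]
        simp only [Pi.add_apply]
        rw [← Finset.sum_sub_distrib]
        simp_rw [key]
        rw [← Finset.sum_div, Finset.sum_add_distrib, ← Finset.sum_div, ← hr]
      rw [hsum, lt_div_iff₀ hv0, hx₀]
      constructor
      · intro h; nlinarith
      · intro h; nlinarith
    have bad : (Measure.map (fun y => a + y) G) B ≤ ENNReal.ofReal δ := by
      rw [Measure.map_apply (f := fun y : Fin t → ℝ => a + y) (by fun_prop) hBm, badpre]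
      calc G {y : Fin t → ℝ | x₀ < ∑ j, Δ j * y j}
          ≤ ENNReal.ofReal (Real.exp (-(s * x₀) + s ^ 2 * r * v / 2)) := by
            rw [hG]
            exact chernoff_gauss v hv Δ s x₀ hs0
        _ ≤ ENNReal.ofReal δ := by
            refine ENNReal.ofReal_le_ofReal ?_
            have heq : -(s * x₀) + s ^ 2 * r * (v : ℝ) / 2 = -((ε - m) ^ 2 / (4 * m)) := by
              rw [hs, hx₀eq, hm]
              field_simp
              ring
            rw [heq]
            exact hexp
    -- combine
    calc (Measure.map (fun y => a + y) G) T
        ≤ (Measure.map (fun y => a + y) G) (T ∩ B) + (Measure.map (fun y => a + y) G) (T \ B) :=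
          measure_le_inter_add_diff _ T B
      _ ≤ ENNReal.ofReal δ + ENNReal.ofReal (Real.exp ε) * (G.withDensity Fb) T := by
          gcongr
          · exact le_trans (measure_mono Set.inter_subset_right) bad
          · rw [hμ]; exact good
      _ = ENNReal.ofReal (Real.exp ε) * (Measure.map (fun y => b + y) G) T + ENNReal.ofReal δ := by
          rw [hν, add_comm]

lemma card_sq_le {n : ℕ} (A B : Finset (Fin n × Fin n)) (e : Fin n × Fin n)
    (h : ∀ p, p ≠ e → (p ∈ A ↔ p ∈ B)) : ((A.card : ℝ) - (B.card : ℝ)) ^ 2 ≤ 1 := by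
  classical
  have hAB : A \ {e} = B \ {e} := by
    ext p
    simp only [Finset.mem_sdiff, Finset.mem_singleton]
    constructor
    · rintro ⟨hp, hpe⟩; exact ⟨(h p hpe).mp hp, hpe⟩
    · rintro ⟨hp, hpe⟩; exact ⟨(h p hpe).mpr hp, hpe⟩
  have key : ∀ C D : Finset (Fin n × Fin n), C \ {e} = D \ {e} → C.card ≤ D.card + 1 := by
    intro C D hCD
    calc C.card ≤ ((C \ {e}) ∪ {e}).card := Finset.card_le_card (fun p hp => by
          by_cases hpe : p = e
          · simp [hpe]
          · simp [Finset.mem_union, Finset.mem_sdiff, hp, hpe])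
      _ ≤ (C \ {e}).card + ({e} : Finset (Fin n × Fin n)).card := Finset.card_union_le _ _
      _ = (D \ {e}).card + 1 := by rw [hCD, Finset.card_singleton]
      _ ≤ D.card + 1 := by
          gcongr
          exact Finset.sdiff_subset (s := D) (t := ({e} : Finset (Fin n × Fin n)))
  have h1 : A.card ≤ B.card + 1 := key A B hAB
  have h2 : B.card ≤ A.card + 1 := key B A hAB.symm
  have h1' : (A.card : ℝ) ≤ (B.card : ℝ) + 1 := by exact_mod_cast h1
  have h2' : (B.card : ℝ) ≤ (A.card : ℝ) + 1 := by exact_mod_cast h2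
  nlinarith

/-- The naïve-δ approach satisfies `(ε, δ)`-edge-differential privacy: on edge-neighboring
weekly ARP-request graphs, releasing the weekly total degrees perturbed by i.i.d. Gaussian
noise of mean `0` and variance `t/(2ρ)`, where `ρ = (√(log(1/δ) + ε) − √(log(1/δ)))²`,
followed by any measurable post-processing `P`, is `(ε, δ)`-indistinguishable. -/
theorem naive_delta_approach_edge_dp (n t : ℕ) (hn : 0 < n) (ht : 0 < t)
    (ε δ : ℝ) (hε : 0 < ε) (hδ₀ : 0 < δ) (hδ₁ : δ < 1) (ρ : ℝ)
    (hρ : ρ = (Real.sqrt (Real.log (1 / δ) + ε) - Real.sqrt (Real.log (1 / δ))) ^ 2)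
    (V V' : Fin t → Finset (Fin n × Fin n))
    (hneighbor : ∃ e : Fin n × Fin n, ∀ j : Fin t, ∀ p : Fin n × Fin n, p ≠ e →
      (p ∈ V j ↔ p ∈ V' j))
    (P : (Fin t → ℝ) → (Fin t → ℝ)) (hP : Measurable P) :
    Indist
      (Measure.map (fun y => P (weeklyDegrees V + y))
        (Measure.pi fun _ : Fin t => gaussianReal 0 (((t : ℝ) / (2 * ρ)).toNNReal)))
      (Measure.map (fun y => P (weeklyDegrees V' + y))
        (Measure.pi fun _ : Fin t => gaussianReal 0 (((t : ℝ) / (2 * ρ)).toNNReal)))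
      ε δ := by
  intro S hS
  have hadd : ∀ c : Fin t → ℝ, Measurable fun y : Fin t → ℝ => c + y := fun c => by fun_prop
  have hco : ∀ c : Fin t → ℝ, (fun y : Fin t → ℝ => P (c + y)) = P ∘ (fun y => c + y) :=
    fun c => rfl
  rw [hco, hco, ← Measure.map_map hP (hadd _), ← Measure.map_map hP (hadd _),
    Measure.map_apply hP hS, Measure.map_apply hP hS]
  have hsens : ∑ j, (weeklyDegrees V j - weeklyDegrees V' j) ^ 2 ≤ (t : ℝ) := by
    obtain ⟨e, he⟩ := hneighbor
    calc ∑ j, (weeklyDegrees V j - weeklyDegrees V' j) ^ 2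
        ≤ ∑ _j : Fin t, (1 : ℝ) :=
          Finset.sum_le_sum fun j _ => card_sq_le (V j) (V' j) e (he j)
      _ = t := by simp
  exact shift_indist ht ε δ ρ hε hδ₀ hδ₁ hρ _ _ hsens _ (hP hS)
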